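/- Let θ > 0, ε > 0, T > 1, α > 0, and let {x^j} be a sequence of continuous functions [1,T] → ℝⁿ satisfying ‖x^1(t) − x^0(t)‖ ≤ ε (log t)^α / Γ(α+1) and ‖x^{j+1}(t) − x^j(t)‖ ≤ (θ/Γ(α)) ∫₁ᵗ (log(t/s))^{α−1} ‖x^j(s) − x^{j−1}(s)‖ ds/s for all j ≥ 1 and t ∈ [1,T]. Then ‖x^j(t) − x^{j−1}(t)‖ ≤ (ε/θ) (θ(log t)^α)^j / Γ(jα+1) for all j ≥ 1 and t ∈ [1,T]. -/

import Mathlib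

open Real MeasureTheory Set

lemma real_beta (a b : ℝ) (ha : 0 < a) (hb : 0 < b) :
    ∫ v in (0:ℝ)..1, v ^ (a - 1) * (1 - v) ^ (b - 1)
      = Real.Gamma a * Real.Gamma b / Real.Gamma (a + b) := by
  have hab : Real.Gamma (a + b) ≠ 0 := (Real.Gamma_pos_of_pos (by linarith)).ne'
  have h := Complex.Gamma_mul_Gamma_eq_betaIntegral (s := (a:ℂ)) (t := (b:ℂ))
    (by simpa using ha) (by simpa using hb)
  have hbeta : Complex.betaIntegral a b
      = ((∫ v in (0:ℝ)..1, v ^ (a - 1) * (1 - v) ^ (b - 1) : ℝ) : ℂ) := by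
    rw [Complex.betaIntegral, ← intervalIntegral.integral_ofReal]
    refine intervalIntegral.integral_congr fun v hv => ?_
    rw [uIcc_of_le zero_le_one] at hv
    rw [Complex.ofReal_mul, Complex.ofReal_cpow hv.1, Complex.ofReal_cpow (by linarith [hv.2] : (0:ℝ) ≤ 1 - v)]
    push_cast
    ring
  rw [hbeta, Complex.Gamma_ofReal, Complex.Gamma_ofReal, ← Complex.ofReal_add,
    Complex.Gamma_ofReal, ← Complex.ofReal_mul, ← Complex.ofReal_mul] at h
  have h2 := Complex.ofReal_inj.mp h
  field_simp
  linarith [h2]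

lemma g_intble (α β L : ℝ) (hα : 0 < α) (hβ : 0 < β) :
    IntervalIntegrable (fun u => (L - u) ^ (α - 1) * u ^ β) volume 0 L := by
  have h1 : IntervalIntegrable (fun u : ℝ => (L - u) ^ (α - 1)) volume 0 L := by
    have := (intervalIntegral.intervalIntegrable_rpow' (a := L) (b := 0)
      (r := α - 1) (by linarith)).comp_sub_left L
    simp at this ⊢; exact this
  have hc : ContinuousOn (fun u : ℝ => u ^ β) (uIcc 0 L) := fun u _ =>
    ((Real.continuousAt_rpow_const u β (Or.inr hβ.le)).continuousWithinAt)
  exact h1.mul_continuousOn hc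

lemma log_image (t : ℝ) (ht : 1 ≤ t) : Real.log '' Icc 1 t = Icc 0 (Real.log t) := by
  ext u
  constructor
  · rintro ⟨s, hs, rfl⟩
    exact ⟨by simpa using Real.log_nonneg hs.1,
      Real.log_le_log (by linarith [hs.1]) hs.2⟩
  · rintro ⟨h0, h1⟩
    refine ⟨Real.exp u, ⟨?_, ?_⟩, Real.log_exp u⟩
    · simpa [Real.exp_zero] using Real.exp_le_exp.mpr h0
    · calc Real.exp u ≤ Real.exp (Real.log t) := Real.exp_le_exp.mpr h1
        _ = t := Real.exp_log (by linarith)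

lemma log_intble (t : ℝ) (ht : 1 < t) {g : ℝ → ℝ}
    (hg : IntegrableOn g (Icc 0 (Real.log t))) :
    IntegrableOn (fun s => s⁻¹ * g (Real.log s)) (Icc 1 t) := by
  have hlog : ∀ s ∈ Icc (1:ℝ) t, HasDerivWithinAt Real.log s⁻¹ (Icc 1 t) s :=
    fun s hs => (Real.hasDerivAt_log (by linarith [hs.1])).hasDerivWithinAt
  have hinj : InjOn Real.log (Icc 1 t) :=
    Real.log_injOn_pos.mono (fun s hs => mem_Ioi.mpr (lt_of_lt_of_le one_pos hs.1))
  have := (integrableOn_image_iff_integrableOn_abs_deriv_smul measurableSet_Icc hlog hinj g).mp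
    (by rwa [log_image t ht.le])
  exact this.congr_fun (fun s hs => by
    dsimp only
    rw [smul_eq_mul, abs_of_pos (inv_pos.mpr (lt_of_lt_of_le one_pos hs.1))]) measurableSet_Icc

lemma key_eval (α β t : ℝ) (hα : 0 < α) (hβ : 0 < β) (ht : 1 < t) :
    ∫ s in (1:ℝ)..t, s⁻¹ * ((Real.log t - Real.log s) ^ (α - 1) * Real.log s ^ β)
      = Real.Gamma α * Real.Gamma (β + 1) / Real.Gamma (α + β + 1)
        * Real.log t ^ (α + β) := by
  set L := Real.log t with hLdef
  have hL : 0 < L := Real.log_pos ht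
  set g : ℝ → ℝ := fun u => (L - u) ^ (α - 1) * u ^ β with hgdef
  have hgi : IntervalIntegrable g volume 0 L := g_intble α β L hα hβ
  have himg : Real.log '' uIcc 1 t = Icc 0 L := by
    rw [uIcc_of_le ht.le]; exact log_image t ht.le
  have hsub : (∫ s in (1:ℝ)..t, s⁻¹ • g (Real.log s)) = ∫ u in (0:ℝ)..L, g u := by
    have h := intervalIntegral.integral_comp_smul_deriv''' (f := Real.log)
      (f' := fun s => s⁻¹) (g := g) (a := 1) (b := t)
      (Real.continuousOn_log.mono (fun s hs => by
        rw [uIcc_of_le ht.le] at hs; simp; linarith [hs.1]))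
      (fun s hs => by
        rw [min_eq_left ht.le, max_eq_right ht.le] at hs
        exact (Real.hasDerivAt_log (by linarith [hs.1])).hasDerivWithinAt)
      ?_ ?_ ?_
    · rw [Real.log_one] at h; exact h
    · -- continuity of g on log '' Ioo 1 t
      have hsubset : Real.log '' Ioo (min 1 t) (max 1 t) ⊆ Ioo 0 L := by
        rw [min_eq_left ht.le, max_eq_right ht.le]
        rintro u ⟨s, hs, rfl⟩
        exact ⟨Real.log_pos hs.1, Real.log_lt_log (by linarith [hs.1]) hs.2⟩
      refine ContinuousOn.mono ?_ hsubset
      refine ContinuousOn.mul ?_ ?_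
      · intro u hu
        exact ((Real.continuousAt_rpow_const (L - u) (α - 1)
          (Or.inl (sub_ne_zero.mpr hu.2.ne'))).comp
          (by continuity : Continuous fun u : ℝ => L - u).continuousAt).continuousWithinAt
      · exact fun u _ => (Real.continuousAt_rpow_const u β (Or.inr hβ.le)).continuousWithinAt
    · rw [himg]
      exact ((intervalIntegrable_iff' (f := g) (μ := volume) (a := 0) (b := L)).mp hgi).mono_set (by rw [uIcc_of_le hL.le])
    · rw [uIcc_of_le ht.le]
      exact log_intble t ht ((intervalIntegrable_iff' (f := g) (μ := volume) (a := 0) (b := L)).mp hgi |>.mono_set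
        (by rw [uIcc_of_le hL.le]))
  have h1 : L • (∫ v in (0:ℝ)..1, g (L * v)) = ∫ u in (0:ℝ)..L, g u := by
    simpa using intervalIntegral.smul_integral_comp_mul_left (a := (0:ℝ)) (b := 1) g L
  have h2 : (∫ v in (0:ℝ)..1, g (L * v))
      = L ^ (α - 1) * L ^ β * ∫ v in (0:ℝ)..1, v ^ β * (1 - v) ^ (α - 1) := by
    rw [← intervalIntegral.integral_const_mul]
    refine intervalIntegral.integral_congr fun v hv => ?_
    rw [uIcc_of_le zero_le_one] at hv
    have h1v : (0:ℝ) ≤ 1 - v := by linarith [hv.2]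
    simp only [hgdef]
    rw [show L - L * v = L * (1 - v) by ring, Real.mul_rpow hL.le h1v,
      Real.mul_rpow hL.le hv.1]
    ring
  have hB : (∫ v in (0:ℝ)..1, v ^ β * (1 - v) ^ (α - 1))
      = Real.Gamma (β + 1) * Real.Gamma α / Real.Gamma (β + 1 + α) := by
    have := real_beta (β + 1) α (by linarith) hα
    simp at this ⊢; exact this
  have hLL : L * (L ^ (α - 1) * L ^ β) = L ^ (α + β) := by
    calc L * (L ^ (α - 1) * L ^ β) = L ^ (1:ℝ) * L ^ (α - 1 + β) := by
          rw [Real.rpow_one, Real.rpow_add hL]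
      _ = L ^ (1 + (α - 1 + β)) := (Real.rpow_add hL _ _).symm
      _ = L ^ (α + β) := by ring_nf
  have hfinal : (∫ s in (1:ℝ)..t, s⁻¹ • g (Real.log s))
      = Real.Gamma α * Real.Gamma (β + 1) / Real.Gamma (α + β + 1) * L ^ (α + β) := by
    rw [hsub, ← h1, h2, hB, smul_eq_mul, show β + 1 + α = α + β + 1 by ring]
    rw [show L * (L ^ (α - 1) * L ^ β * (Real.Gamma (β + 1) * Real.Gamma α / Real.Gamma (α + β + 1)))
      = L * (L ^ (α - 1) * L ^ β) * (Real.Gamma (β + 1) * Real.Gamma α / Real.Gamma (α + β + 1)) by ring,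
      hLL]
    ring
  simpa only [smul_eq_mul, hgdef] using hfinal

theorem stmt_9 (n : ℕ) (θ ε T α : ℝ) (hθ : 0 < θ) (hε : 0 < ε) (hT : 1 < T) (hα : 0 < α)
    (x : ℕ → ℝ → EuclideanSpace ℝ (Fin n))
    (hx_cont : ∀ j, ContinuousOn (x j) (Icc 1 T))
    (hbase : ∀ t ∈ Icc (1:ℝ) T,
      ‖x 1 t - x 0 t‖ ≤ ε * (Real.log t) ^ α / Real.Gamma (α + 1))
    (hrec : ∀ j : ℕ, 1 ≤ j → ∀ t ∈ Icc (1:ℝ) T,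
      ‖x (j + 1) t - x j t‖ ≤ (θ / Real.Gamma α) *
        ∫ s in (1:ℝ)..t, (Real.log (t / s)) ^ (α - 1) * ‖x j s - x (j - 1) s‖ / s) :
    ∀ j : ℕ, 1 ≤ j → ∀ t ∈ Icc (1:ℝ) T,
      ‖x j t - x (j - 1) t‖ ≤ (ε / θ) * (θ * (Real.log t) ^ α) ^ j / Real.Gamma (j * α + 1) := by
  intro j hj
  induction j, hj using Nat.le_induction with
  | base =>
    intro t htT
    have h := hbase t htT
    have heq : ε / θ * (θ * Real.log t ^ α) = ε * Real.log t ^ α := by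
      field_simp
    simp only [Nat.cast_one, one_mul, pow_one, Nat.sub_self]
    rw [heq]
    exact h
  | succ j hj ih =>
    intro t htT
    have hj1 : (1:ℝ) ≤ (j:ℝ) := by exact_mod_cast hj
    have hβ : 0 < (j:ℝ) * α := by nlinarith
    have hΓα : 0 < Real.Gamma α := Real.Gamma_pos_of_pos hα
    have hΓj : 0 < Real.Gamma ((j:ℝ) * α + 1) := Real.Gamma_pos_of_pos (by nlinarith)
    have hrec' := hrec j hj t htT
    simp only [Nat.add_sub_cancel]
    rcases eq_or_lt_of_le htT.1 with heq | htt
    · -- t = 1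
      subst heq
      have hR : ε / θ * (θ * Real.log 1 ^ α) ^ (j + 1) / Real.Gamma (↑(j + 1) * α + 1) = 0 := by
        rw [Real.log_one, Real.zero_rpow hα.ne']
        simp
      rw [hR]
      exact hrec'.trans_eq (by rw [intervalIntegral.integral_same, mul_zero])
    · -- 1 < t
      have hL : 0 < Real.log t := Real.log_pos htt
      set C : ℝ := ε / θ * θ ^ j / Real.Gamma ((j:ℝ) * α + 1) with hCdef
      have hC : 0 ≤ C := by positivity
      have hIH : ∀ s ∈ Icc (1:ℝ) t, ‖x j s - x (j - 1) s‖
          ≤ C * Real.log s ^ ((j:ℝ) * α) := by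
        intro s hs
        have hls : 0 ≤ Real.log s := Real.log_nonneg hs.1
        calc ‖x j s - x (j - 1) s‖
            ≤ ε / θ * (θ * Real.log s ^ α) ^ j / Real.Gamma (↑j * α + 1) :=
              ih s ⟨hs.1, hs.2.trans htT.2⟩
          _ = C * Real.log s ^ ((j:ℝ) * α) := by
              rw [hCdef, mul_pow, ← Real.rpow_natCast (Real.log s ^ α) j,
                ← Real.rpow_mul hls, mul_comm α (j:ℝ)]
              ring
      set g : ℝ → ℝ := fun u => (Real.log t - u) ^ (α - 1) * u ^ ((j:ℝ) * α) with hgdef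
      have hgInt : IntegrableOn g (Icc 0 (Real.log t)) :=
        ((intervalIntegrable_iff' (f := g) (μ := volume) (a := 0) (b := Real.log t)).mp (g_intble α ((j:ℝ) * α) (Real.log t) hα hβ)).mono_set
          (by rw [uIcc_of_le hL.le])
      have hI2 : IntegrableOn (fun s => s⁻¹ * g (Real.log s)) (Icc 1 t) :=
        log_intble t htt hgInt
      set f₂ : ℝ → ℝ := fun s =>
        Real.log (t / s) ^ (α - 1) * (C * Real.log s ^ ((j:ℝ) * α)) / s with hf₂def
      have hEq : EqOn (fun s => C * (s⁻¹ * g (Real.log s))) f₂ (Icc 1 t) := by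
        intro s hs
        have hs0 : (0:ℝ) < s := lt_of_lt_of_le one_pos hs.1
        simp only [hf₂def, hgdef]
        rw [Real.log_div (by linarith : t ≠ 0) hs0.ne']
        field_simp
      have h₂ : IntervalIntegrable f₂ volume 1 t := by
        rw [intervalIntegrable_iff', uIcc_of_le htT.1]
        exact MeasureTheory.IntegrableOn.congr_fun (hI2.const_mul C) hEq measurableSet_Icc
      have hApos : ∀ s ∈ Icc (1:ℝ) t, 0 ≤ Real.log (t / s) ^ (α - 1) := by
        intro s hs
        have hs0 : (0:ℝ) < s := lt_of_lt_of_le one_pos hs.1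
        exact Real.rpow_nonneg (Real.log_nonneg (by
          rw [le_div_iff₀ hs0]; simpa using hs.2)) _
      have hmono : (∫ s in (1:ℝ)..t, Real.log (t / s) ^ (α - 1) * ‖x j s - x (j - 1) s‖ / s)
          ≤ ∫ s in (1:ℝ)..t, f₂ s := by
        by_cases hint : IntervalIntegrable
          (fun s => Real.log (t / s) ^ (α - 1) * ‖x j s - x (j - 1) s‖ / s) volume 1 t
        · refine intervalIntegral.integral_mono_on htT.1 hint h₂ fun s hs => ?_
          have hs0 : (0:ℝ) < s := lt_of_lt_of_le one_pos hs.1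
          simp only [hf₂def]
          gcongr
          · exact hApos s hs
          · exact hIH s hs
        · rw [intervalIntegral.integral_undef hint]
          refine intervalIntegral.integral_nonneg htT.1 fun s hs => ?_
          have hs0 : (0:ℝ) < s := lt_of_lt_of_le one_pos hs.1
          have hls : 0 ≤ Real.log s := Real.log_nonneg hs.1
          exact div_nonneg (mul_nonneg (hApos s hs)
            (mul_nonneg hC (Real.rpow_nonneg hls _))) hs0.le
      have hval : (∫ s in (1:ℝ)..t, f₂ s)
          = C * (Real.Gamma α * Real.Gamma ((j:ℝ) * α + 1) / Real.Gamma (α + (j:ℝ) * α + 1)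
              * Real.log t ^ (α + (j:ℝ) * α)) := by
        rw [show (∫ s in (1:ℝ)..t, f₂ s)
            = ∫ s in (1:ℝ)..t, C * (s⁻¹ * g (Real.log s)) from
          intervalIntegral.integral_congr (by rw [uIcc_of_le htT.1]; exact hEq.symm),
          intervalIntegral.integral_const_mul, hgdef]
        rw [key_eval α ((j:ℝ) * α) t hα hβ htt]
      have hΓnew : 0 < Real.Gamma (α + (j:ℝ) * α + 1) := Real.Gamma_pos_of_pos (by nlinarith)
      calc ‖x (j + 1) t - x j t‖
          ≤ (θ / Real.Gamma α) *
            ∫ s in (1:ℝ)..t, Real.log (t / s) ^ (α - 1) * ‖x j s - x (j - 1) s‖ / s := hrec'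
        _ ≤ (θ / Real.Gamma α) * ∫ s in (1:ℝ)..t, f₂ s :=
            mul_le_mul_of_nonneg_left hmono (by positivity)
        _ = ε / θ * (θ * Real.log t ^ α) ^ (j + 1) / Real.Gamma (↑(j + 1) * α + 1) := by
            rw [hval, hCdef]
            have hpow : (θ * Real.log t ^ α) ^ (j + 1)
                = θ ^ (j + 1) * Real.log t ^ (α + (j:ℝ) * α) := by
              rw [mul_pow, ← Real.rpow_natCast (Real.log t ^ α) (j + 1),
                ← Real.rpow_mul hL.le]
              push_cast
              ring_nf
            rw [hpow, show ((j:ℕ) + 1 : ℕ) * α + 1 = α + (j:ℝ) * α + 1 by push_cast; ring]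
            field_simp
            ring
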